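/- Let R be a commutative unital ring, let 𝔫 be the nilradical of R (the ideal of nilpotent elements), and let n ≥ 1. For each integer e ≥ 0 let G(e) denote the kernel of the natural group homomorphism GL_n(R) → GL_n(R/𝔫^e) induced by the quotient map R → R/𝔫^e. Then for all integers e, f ≥ 0, the commutator subgroup [G(e), G(f)] is contained in G(e+f). -/

import Mathlib

lemma mem_ker_glMap_iff {R : Type} [CommRing R] {n : ℕ} (I : Ideal R)
    (A : Matrix.GeneralLinearGroup (Fin n) R) :
    A ∈ (Matrix.GeneralLinearGroup.map (Ideal.Quotient.mk I) :
        Matrix.GeneralLinearGroup (Fin n) R →*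
          Matrix.GeneralLinearGroup (Fin n) (R ⧸ I)).ker ↔
      ∀ i j, ((A : Matrix (Fin n) (Fin n) R) - 1) i j ∈ I := by
  rw [MonoidHom.mem_ker, Units.ext_iff]
  constructor
  · intro h i j
    have := congrFun (congrFun h i) j
    rw [Matrix.GeneralLinearGroup.map_apply] at this
    have h1 : (1 : Matrix.GeneralLinearGroup (Fin n) (R ⧸ I)) i j
        = Ideal.Quotient.mk I ((1 : Matrix (Fin n) (Fin n) R) i j) := by
      by_cases hij : i = j <;> simp [Matrix.one_apply, hij]
    rw [h1] at this
    rw [Matrix.sub_apply, ← Ideal.Quotient.eq_zero_iff_mem, map_sub, this, sub_self]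
  · intro h
    ext i j
    rw [Matrix.GeneralLinearGroup.map_apply]
    have h1 : (1 : Matrix.GeneralLinearGroup (Fin n) (R ⧸ I)) i j
        = Ideal.Quotient.mk I ((1 : Matrix (Fin n) (Fin n) R) i j) := by
      by_cases hij : i = j <;> simp [Matrix.one_apply, hij]
    rw [h1, Ideal.Quotient.eq]
    exact h i j

lemma matrix_mul_mem_left {R : Type} [CommRing R] {n : ℕ} (I : Ideal R)
    {M : Matrix (Fin n) (Fin n) R} (N : Matrix (Fin n) (Fin n) R)
    (hM : ∀ i j, M i j ∈ I) : ∀ i j, (M * N) i j ∈ I := fun i j => by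
  rw [Matrix.mul_apply]
  exact Ideal.sum_mem _ fun k _ => I.mul_mem_right _ (hM i k)

lemma matrix_mul_mem_right {R : Type} [CommRing R] {n : ℕ} (I : Ideal R)
    {M : Matrix (Fin n) (Fin n) R} (N : Matrix (Fin n) (Fin n) R)
    (hM : ∀ i j, M i j ∈ I) : ∀ i j, (N * M) i j ∈ I := fun i j => by
  rw [Matrix.mul_apply]
  exact Ideal.sum_mem _ fun k _ => I.mul_mem_left _ (hM k j)

/-- For a commutative unital ring `R` with nilradical `𝔫`, and `G (e)` the kernel of
`GL_n(R) → GL_n(R/𝔫^e)`, one has `[G(e), G(f)] ≤ G(e+f)` for all `e, f ≥ 0`. -/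
theorem commutator_ker_glMap_nilradical_pow_le
    (R : Type) [CommRing R] (n : ℕ) (hn : 1 ≤ n)
    (G : ℕ → Subgroup (Matrix.GeneralLinearGroup (Fin n) R))
    (hG : ∀ e : ℕ, G e =
      (Matrix.GeneralLinearGroup.map
        (Ideal.Quotient.mk ((nilradical R) ^ e)) :
          Matrix.GeneralLinearGroup (Fin n) R →*
            Matrix.GeneralLinearGroup (Fin n) (R ⧸ (nilradical R) ^ e)).ker)
    (e f : ℕ) :
    ⁅G e, G f⁆ ≤ G (e + f) := by
  rw [Subgroup.commutator_le]
  intro A hA B hB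
  rw [hG e, mem_ker_glMap_iff] at hA
  rw [hG f, mem_ker_glMap_iff] at hB
  rw [hG (e + f), mem_ker_glMap_iff]
  set a : Matrix (Fin n) (Fin n) R := (A : Matrix (Fin n) (Fin n) R)
  set b : Matrix (Fin n) (Fin n) R := (B : Matrix (Fin n) (Fin n) R)
  open scoped commutatorElement in
  have key : (⁅A, B⁆ : Matrix.GeneralLinearGroup (Fin n) R).val - 1
      = (((a - 1) * (b - 1) - (b - 1) * (a - 1)) * (A⁻¹ : Matrix.GeneralLinearGroup (Fin n) R))
          * (B⁻¹ : Matrix.GeneralLinearGroup (Fin n) R) := by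
    have ha : a * (A⁻¹ : Matrix.GeneralLinearGroup (Fin n) R) = 1 := A.mul_inv
    have hb : b * (B⁻¹ : Matrix.GeneralLinearGroup (Fin n) R) = 1 := B.mul_inv
    have hcomm : (⁅A, B⁆ : Matrix.GeneralLinearGroup (Fin n) R).val
        = a * b * (A⁻¹ : Matrix.GeneralLinearGroup (Fin n) R)
            * (B⁻¹ : Matrix.GeneralLinearGroup (Fin n) R) := by
      simp only [commutatorElement_def, Units.val_mul]; rfl
    rw [hcomm]
    have expand : ((a - 1) * (b - 1) - (b - 1) * (a - 1)) = a * b - b * a := by noncomm_ring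
    rw [expand]
    have : b * a * (A⁻¹ : Matrix.GeneralLinearGroup (Fin n) R)
        * (B⁻¹ : Matrix.GeneralLinearGroup (Fin n) R) = 1 := by
      rw [mul_assoc b a, ha, mul_one, hb]
    rw [sub_mul, sub_mul, this]
  intro i j
  rw [key]
  apply matrix_mul_mem_left
  apply matrix_mul_mem_left
  intro i j
  rw [pow_add]
  apply Ideal.sub_mem
  · rw [Matrix.mul_apply]
    exact Ideal.sum_mem _ fun k _ => Ideal.mul_mem_mul (hA i k) (hB k j)
  · rw [Matrix.mul_apply]
    refine Ideal.sum_mem _ fun k _ => ?_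
    rw [mul_comm ((nilradical R) ^ e)]
    exact Ideal.mul_mem_mul (hB i k) (hA k j)
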